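/- Let M = [[iv, conj(b)],[b, iv]] with v > 0 solve the Dyson equation for η > 0, ζ ∈ ℂ and ρ ∈ (-1,1). Then (Re ζ)²/(1 + η/v + ρ)² + (Im ζ)²/(1 + η/v - ρ)² = |b|² = 1/(1 + η/v) - v². -/

import Mathlib

open Matrix

/-- The self-energy operator of the elliptic ensemble. -/
noncomputable def selfEnergy (ρ : ℝ) (A : Matrix (Fin 2) (Fin 2) ℂ) : Matrix (Fin 2) (Fin 2) ℂ :=
  !![A 1 1, (ρ : ℂ) * A 1 0; (ρ : ℂ) * A 0 1, A 0 0]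

theorem stmt4 (ρ η v : ℝ) (hρ₁ : -1 < ρ) (hρ₂ : ρ < 1) (hη : 0 < η) (hv : 0 < v)
    (ζ b : ℂ) (M : Matrix (Fin 2) (Fin 2) ℂ)
    (hform : M = !![Complex.I * v, (starRingEnd ℂ) b; b, Complex.I * v])
    (hunit : IsUnit M.det)
    (hdyson : -M⁻¹ = !![Complex.I * η, ζ; (starRingEnd ℂ) ζ, Complex.I * η] + selfEnergy ρ M) :
    ζ.re ^ 2 / (1 + η / v + ρ) ^ 2 + ζ.im ^ 2 / (1 + η / v - ρ) ^ 2 = ‖b‖ ^ 2 ∧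
      ‖b‖ ^ 2 = 1 / (1 + η / v) - v ^ 2 := by
  subst hform
  set K : ℝ := v ^ 2 + (b.re ^ 2 + b.im ^ 2) with hKdef
  have hK0 : 0 < K := by positivity
  have hdet : (!![Complex.I * v, (starRingEnd ℂ) b; b, Complex.I * v]).det = -(K : ℂ) := by
    simp only [Matrix.det_fin_two_of]
    rw [Complex.ext_iff]
    simp [Complex.mul_re, Complex.mul_im, hKdef, ← Complex.ofReal_pow]
    constructor <;> ring
  rw [Matrix.inv_def, hdet, Matrix.adjugate_fin_two_of, Ring.inverse_eq_inv'] at hdyson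
  have h00 := congrFun (congrFun hdyson 0) 0
  have h01 := congrFun (congrFun hdyson 0) 1
  simp [selfEnergy, Matrix.add_apply, Matrix.smul_apply, Matrix.neg_apply] at h00 h01
  have hKc : (K:ℂ) ≠ 0 := by exact_mod_cast hK0.ne'
  field_simp at h00
  rw [Complex.ext_iff] at h00
  simp [Complex.mul_re, Complex.mul_im] at h00
  have h01' : (starRingEnd ℂ) b = (ζ + (ρ:ℂ) * b) * (-(K:ℂ)) := by
    rw [← h01]; field_simp
  rw [Complex.ext_iff] at h01'
  simp [Complex.mul_re, Complex.mul_im] at h01'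
  obtain ⟨hre, him⟩ := h01'
  have hv' : v ≠ 0 := hv.ne'
  have hc1 : 0 < 1 + η / v + ρ := by
    have : 0 < η / v := by positivity
    linarith
  have hc2 : 0 < 1 + η / v - ρ := by
    have : 0 < η / v := by positivity
    linarith
  have hz1 : ζ.re = -b.re * (1 + η / v + ρ) := by
    field_simp
    linear_combination (η + v) * hre + (ζ.re + ρ * b.re) * h00
  have hz2 : ζ.im = b.im * (1 + η / v - ρ) := by
    field_simp
    linear_combination (ζ.im + ρ * b.im) * h00 - (η + v) * him
  have habs : ‖b‖ ^ 2 = b.re ^ 2 + b.im ^ 2 := by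
    rw [Complex.sq_norm, Complex.normSq_apply]; ring
  constructor
  · have e1 : ζ.re ^ 2 / (1 + η / v + ρ) ^ 2 = b.re ^ 2 := by
      rw [hz1]
      rw [div_eq_iff (by positivity)]
      ring
    have e2 : ζ.im ^ 2 / (1 + η / v - ρ) ^ 2 = b.im ^ 2 := by
      rw [hz2]
      rw [div_eq_iff (by positivity)]
      ring
    rw [habs, e1, e2]
  · rw [habs]
    have hx : 1 / (1 + η / v) = K := by
      rw [eq_comm, eq_div_iff (by positivity)]
      field_simp
      linarith [h00]
    rw [hx, hKdef]; ring
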